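/- Let k, n, t, m be integers with k, n, t, m ≥ 2 and suppose there exists a (2^k, 2^t; n, m)-de Bruijn array code of size Δ in which every column of every codeword has even weight. Then there exists a (2^k, 2^{m+t}; n + 1, m)-de Bruijn array code of size Δ. -/

import Mathlib

/-- `C` is an `(r, s; n, m)`-de Bruijn array code of size `Δ`: every `n × m` binary
matrix appears exactly once as a window in exactly one codeword. -/
def IsDBAC (r s n m Δ : ℕ) (C : Fin Δ → (ZMod r × ZMod s → ZMod 2)) : Prop :=
  ∀ M : Fin n → Fin m → ZMod 2,
    ∃! p : Fin Δ × ZMod r × ZMod s,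
      ∀ (x : Fin n) (y : Fin m),
        C p.1 (p.2.1 + (x : ℕ), p.2.2 + (y : ℕ)) = M x y

/-- The weight of the `j`-th column of a doubly-periodic array `A`. -/
noncomputable def colWeight {r s : ℕ} (A : ZMod r × ZMod s → ZMod 2) (j : ZMod s) : ℕ :=
  {i : ZMod r | A (i, j) = 1}.ncard

namespace DBACAux


variable {α : Type*} [Fintype α] [DecidableEq α]

lemma key_iter (σ σ' : Equiv.Perm α) (x₀ x₁ : α)
    (hsep : ¬ σ.SameCycle x₀ x₁)
    (h01 : σ' x₀ = σ x₁)
    (hrest : ∀ z, z ≠ x₀ → z ≠ x₁ → σ' z = σ z) :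
    ∀ k, 1 ≤ k → k ≤ Function.minimalPeriod σ x₁ → (σ' ^ k) x₀ = (σ ^ k) x₁ := by
  intro k
  induction k with
  | zero => omega
  | succ k ih =>
    intro _ hk
    rcases Nat.lt_or_ge 1 (k + 1) with h1 | h1
    case inr =>
      have : k = 0 := by omega
      subst this
      simpa using h01
    case inl =>
      have hk1 : 1 ≤ k := by omega
      have hkQ : k < Function.minimalPeriod σ x₁ := by omega
      have ihk := ih hk1 (le_of_lt hkQ)
      have hne1 : (σ ^ k) x₁ ≠ x₁ := by
        intro h
        have hper : Function.IsPeriodicPt σ k x₁ := h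
        exact Function.not_isPeriodicPt_of_pos_of_lt_minimalPeriod (by omega) hkQ hper
      have hne0 : (σ ^ k) x₁ ≠ x₀ := by
        intro h
        exact hsep ⟨-(k : ℤ), by rw [← h]; simp [zpow_neg, ← zpow_natCast]⟩
      calc (σ' ^ (k+1)) x₀ = σ' ((σ' ^ k) x₀) := by
            rw [pow_succ' σ' k]; rfl
        _ = σ ((σ ^ k) x₁) := by rw [ihk, hrest _ hne0 hne1]
        _ = (σ ^ (k+1)) x₁ := by rw [pow_succ' σ k]; rfl

lemma perm_mem_periodicPts (σ : Equiv.Perm α) (x : α) : x ∈ Function.periodicPts σ := by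
  refine ⟨orderOf σ, orderOf_pos σ, ?_⟩
  show ((σ : Equiv.Perm α) ^ (orderOf σ)) x = x
  rw [pow_orderOf_eq_one]; rfl

lemma merge (σ σ' : Equiv.Perm α) (x₀ x₁ : α)
    (hsep : ¬ σ.SameCycle x₀ x₁)
    (h01 : σ' x₀ = σ x₁) (h10 : σ' x₁ = σ x₀)
    (hrest : ∀ z, z ≠ x₀ → z ≠ x₁ → σ' z = σ z) :
    σ'.SameCycle x₀ x₁ ∧ ∀ z z', σ.SameCycle z z' → σ'.SameCycle z z' := by
  have hsep' : ¬ σ.SameCycle x₁ x₀ := fun h => hsep h.symm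
  set Q := Function.minimalPeriod σ x₁ with hQdef
  set P := Function.minimalPeriod σ x₀ with hPdef
  have hQpos : 0 < Q := Function.minimalPeriod_pos_of_mem_periodicPts (perm_mem_periodicPts σ x₁)
  have hPpos : 0 < P := Function.minimalPeriod_pos_of_mem_periodicPts (perm_mem_periodicPts σ x₀)
  have hQfix : (σ ^ Q) x₁ = x₁ :=
    Function.iterate_minimalPeriod (f := ⇑σ) (x := x₁)
  have key01 := key_iter σ σ' x₀ x₁ hsep h01 hrest
  have key10 := key_iter σ σ' x₁ x₀ hsep' h10 (fun z h1 h0 => hrest z h0 h1)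
  have hcyc : σ'.SameCycle x₀ x₁ := ⟨(Q : ℤ), by
    rw [zpow_natCast, key01 Q hQpos le_rfl, hQfix]⟩
  have horb0 : ∀ k : ℕ, σ'.SameCycle x₀ ((σ ^ k) x₀) := by
    intro k
    have hmod : (σ ^ (k % P)) x₀ = (σ ^ k) x₀ :=
      Function.iterate_mod_minimalPeriod_eq (f := ⇑σ) (x := x₀) (n := k)
    rcases Nat.eq_zero_or_pos (k % P) with h | h
    · rw [← hmod, h]; exact Equiv.Perm.SameCycle.rfl
    · have hkey : (σ' ^ (k % P)) x₁ = (σ ^ (k % P)) x₀ :=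
        key10 _ h (le_of_lt (Nat.mod_lt _ hPpos))
      exact hcyc.trans ⟨(Int.ofNat (k % P)), by
        rw [Int.ofNat_eq_natCast, zpow_natCast, hkey, hmod]⟩
  have horb1 : ∀ k : ℕ, σ'.SameCycle x₀ ((σ ^ k) x₁) := by
    intro k
    have hmod : (σ ^ (k % Q)) x₁ = (σ ^ k) x₁ :=
      Function.iterate_mod_minimalPeriod_eq (f := ⇑σ) (x := x₁) (n := k)
    rcases Nat.eq_zero_or_pos (k % Q) with h | h
    · rw [← hmod, h]; simpa using hcyc
    · exact ⟨(Int.ofNat (k % Q)), by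
        rw [Int.ofNat_eq_natCast, zpow_natCast,
          key01 _ h (le_of_lt (Nat.mod_lt _ hQpos)), hmod]⟩
  refine ⟨hcyc, ?_⟩
  intro z z' hzz
  by_cases hz0 : σ.SameCycle x₀ z
  · obtain ⟨i, _, hi⟩ := hz0.exists_pow_eq'
    obtain ⟨i', _, hi'⟩ := (hz0.trans hzz).exists_pow_eq'
    rw [← hi, ← hi']
    exact (horb0 i).symm.trans (horb0 i')
  · by_cases hz1 : σ.SameCycle x₁ z
    · obtain ⟨i, _, hi⟩ := hz1.exists_pow_eq'
      obtain ⟨i', _, hi'⟩ := (hz1.trans hzz).exists_pow_eq'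
      rw [← hi, ← hi']
      exact (horb1 i).symm.trans (horb1 i')
    · -- z outside both orbits: σ' agrees with σ along its orbit
      have hiter : ∀ k : ℕ, (σ' ^ k) z = (σ ^ k) z := by
        intro k
        induction k with
        | zero => rfl
        | succ k ih =>
          have hne0 : (σ ^ k) z ≠ x₀ := by
            intro h
            exact hz0 (Equiv.Perm.SameCycle.symm ⟨(k : ℤ), by rw [zpow_natCast, h]⟩)
          have hne1 : (σ ^ k) z ≠ x₁ := by
            intro h
            exact hz1 (Equiv.Perm.SameCycle.symm ⟨(k : ℤ), by rw [zpow_natCast, h]⟩)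
          calc (σ' ^ (k+1)) z = σ' ((σ' ^ k) z) := by rw [pow_succ' σ' k]; rfl
            _ = σ ((σ ^ k) z) := by rw [ih, hrest _ hne0 hne1]
            _ = (σ ^ (k+1)) z := by rw [pow_succ' σ k]; rfl
      obtain ⟨i, _, hi⟩ := hzz.exists_pow_eq'
      exact ⟨(i : ℤ), by rw [zpow_natCast, hiter i, hi]⟩


section Perm2

variable {s m : ℕ} [NeZero s] [NeZero m]

abbrev St (s m : ℕ) := ZMod s × (Fin m → ZMod 2)

def tailRep {m : ℕ} (w : Fin m → ZMod 2) : Fin m → ZMod 2 :=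
  fun z => if h : (z : ℕ) + 1 < m then w ⟨(z : ℕ) + 1, h⟩ else 0

lemma tailRep_congr {m : ℕ} {w w' : Fin m → ZMod 2}
    (h : ∀ (y : ℕ) (hy : y + 1 < m), w ⟨y + 1, hy⟩ = w' ⟨y + 1, hy⟩) :
    tailRep w = tailRep w' := by
  funext z
  unfold tailRep
  split
  · exact h _ _
  · rfl

lemma tailRep_update0 {m : ℕ} [NeZero m] (w : Fin m → ZMod 2) (b : ZMod 2) :
    tailRep (Function.update w 0 b) = tailRep w := by
  refine tailRep_congr fun y hy => ?_
  rw [Function.update_of_ne]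
  intro h
  have := congrArg Fin.val h
  simp at this

lemma word_ext {m : ℕ} [NeZero m] {w w' : Fin m → ZMod 2}
    (h0 : w 0 = w' 0)
    (h : ∀ (y : ℕ) (hy : y + 1 < m), w ⟨y + 1, hy⟩ = w' ⟨y + 1, hy⟩) : w = w' := by
  funext z
  rcases z with ⟨z, hz⟩
  cases z with
  | zero =>
    have h0' : (⟨0, hz⟩ : Fin m) = 0 := by
      ext; simp
    rw [h0', h0]
  | succ y => exact h y hz

def stepFun (g : St s m → ZMod 2) (x : St s m) : St s m :=
  (x.1 + 1, fun y => if h : (y : ℕ) + 1 < m then x.2 ⟨(y : ℕ) + 1, h⟩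
    else x.2 0 + g (x.1, tailRep x.2))

lemma stepFun_inj (g : St s m → ZMod 2) : Function.Injective (stepFun g) := by
  intro x x' h
  have h1 : x.1 = x'.1 := by
    have := congrArg Prod.fst h
    simpa [stepFun] using this
  have h2 := congrArg Prod.snd h
  simp only [stepFun] at h2
  have htail : ∀ (y : ℕ) (hy : y + 1 < m), x.2 ⟨y + 1, hy⟩ = x'.2 ⟨y + 1, hy⟩ := by
    intro y hy
    have hy' : y < m := by omega
    have := congrFun h2 ⟨y, hy'⟩
    simpa [hy] using this
  have htr : tailRep x.2 = tailRep x'.2 := tailRep_congr htail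
  have hlast : x.2 0 = x'.2 0 := by
    have hm1 : m - 1 < m := Nat.sub_lt (Nat.pos_of_ne_zero (NeZero.ne m)) one_pos
    have := congrFun h2 ⟨m - 1, hm1⟩
    have hnot : ¬ ((m - 1 : ℕ) + 1 < m) := by omega
    simp only [hnot, dif_neg, not_false_iff] at this
    rw [htr, h1] at this
    exact add_right_cancel this
  exact Prod.ext h1 (word_ext hlast htail)

noncomputable def permOf (g : St s m → ZMod 2) : Equiv.Perm (St s m) :=
  Equiv.ofBijective (stepFun g)
    ((Finite.injective_iff_bijective).mp (stepFun_inj g))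

lemma permOf_apply (g : St s m → ZMod 2) (x : St s m) : permOf g x = stepFun g x := rfl

end Perm2
section Conn

variable {s m : ℕ} [NeZero s] [NeZero m]

def pushW {m : ℕ} (w : Fin m → ZMod 2) (b : ZMod 2) : Fin m → ZMod 2 :=
  fun y => if h : (y : ℕ) + 1 < m then w ⟨(y : ℕ) + 1, h⟩ else b

lemma zmod2_cases : ∀ v : ZMod 2, v = 0 ∨ v = 1 := by decide

lemma fapp {m : ℕ} {β : Sort*} (w : Fin m → β) {a b : ℕ} (ha : a < m) (hb : b < m)
    (h : a = b) : w ⟨a, ha⟩ = w ⟨b, hb⟩ := by subst h; rfl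

lemma conn_pair (g : St s m → ZMod 2)
    (H : ∀ (a : ZMod s) (w : Fin m → ZMod 2),
      (permOf g).SameCycle (a, Function.update w 0 0) (a, Function.update w 0 1)) :
    ∀ (x : St s m) (c : ZMod 2), (permOf g).SameCycle x (x.1, Function.update x.2 0 c) := by
  intro x c
  have hx : x = (x.1, Function.update x.2 0 (x.2 0)) := by
    rw [Function.update_eq_self]
  rcases zmod2_cases (x.2 0) with h | h <;> rcases zmod2_cases c with hc | hc <;>
    rw [hc] <;> nth_rewrite 1 [hx] <;> rw [h] <;>
    first
      | exact Equiv.Perm.SameCycle.rfl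
      | exact H x.1 x.2
      | exact (H x.1 x.2).symm

lemma conn_step (g : St s m → ZMod 2)
    (H : ∀ (a : ZMod s) (w : Fin m → ZMod 2),
      (permOf g).SameCycle (a, Function.update w 0 0) (a, Function.update w 0 1)) :
    ∀ (x : St s m) (b : ZMod 2), (permOf g).SameCycle x (x.1 + 1, pushW x.2 b) := by
  intro x b
  set x' : St s m := (x.1, Function.update x.2 0 (b - g (x.1, tailRep x.2))) with hx'
  have h1 : (permOf g).SameCycle x x' := conn_pair g H x _
  have h2 : permOf g x' = (x.1 + 1, pushW x.2 b) := by
    rw [permOf_apply, stepFun]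
    refine Prod.ext rfl ?_
    funext y
    simp only [pushW]
    split
    · next h =>
      show Function.update x.2 0 (b - g (x.1, tailRep x.2)) ⟨(y:ℕ)+1, h⟩ = _
      rw [Function.update_of_ne]
      intro hcon
      have := congrArg Fin.val hcon
      simp at this
    · show Function.update x.2 0 (b - g (x.1, tailRep x.2)) 0 + g (x.1, tailRep (Function.update x.2 0 (b - g (x.1, tailRep x.2)))) = b
      rw [tailRep_update0, Function.update_self, sub_add_cancel]
  exact h1.trans (h2 ▸ ⟨1, by simp⟩)

lemma conn_reach (g : St s m → ZMod 2)
    (H : ∀ (a : ZMod s) (w : Fin m → ZMod 2),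
      (permOf g).SameCycle (a, Function.update w 0 0) (a, Function.update w 0 1)) :
    ∀ (d : ℕ) (x : St s m) (v : Fin m → ZMod 2),
      (∀ (y : ℕ) (hy : y + d < m) (hy' : y < m), v ⟨y, hy'⟩ = x.2 ⟨y + d, hy⟩) →
      (permOf g).SameCycle x (x.1 + (d : ℕ), v) := by
  intro d
  induction d with
  | zero =>
    intro x v hv
    have : v = x.2 := by
      funext z
      rcases z with ⟨z, hz⟩
      simpa using hv z (by omega) hz
    rw [this]
    simp only [Nat.cast_zero, add_zero]
    exact Equiv.Perm.SameCycle.rfl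
  | succ d ih =>
    intro x v hv
    set u : Fin m → ZMod 2 := fun z =>
      if hz : (z : ℕ) = 0 then (if hd : d < m then x.2 ⟨d, hd⟩ else 0)
      else v ⟨(z : ℕ) - 1, lt_of_le_of_lt (Nat.sub_le _ _) z.isLt⟩ with hu
    have hprem : ∀ (y : ℕ) (hy : y + d < m) (hy' : y < m), u ⟨y, hy'⟩ = x.2 ⟨y + d, hy⟩ := by
      intro y hy hy'
      cases y with
      | zero =>
        simp only [hu]
        have hd : d < m := by omega
        simp [hd]
      | succ y' =>
        simp only [hu]
        have hne : ¬ ((⟨y' + 1, hy'⟩ : Fin m) : ℕ) = 0 := by simp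
        rw [dif_neg hne]
        have h2 := hv y' (by omega) (by omega)
        calc v ⟨((⟨y' + 1, hy'⟩ : Fin m) : ℕ) - 1, _⟩
            = v ⟨y', by omega⟩ := fapp v _ _ (by simp)
          _ = x.2 ⟨y' + (d + 1), by omega⟩ := h2
          _ = x.2 ⟨y' + 1 + d, hy⟩ := fapp x.2 _ _ (by omega)
    have hmain := ih x u hprem
    have hm1 : m - 1 < m := Nat.sub_lt (Nat.pos_of_ne_zero (NeZero.ne m)) one_pos
    have hstep := conn_step g H (x.1 + (d : ℕ), u) (v ⟨m - 1, hm1⟩)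
    have hpush : pushW u (v ⟨m - 1, hm1⟩) = v := by
      funext z
      rcases z with ⟨z, hz⟩
      simp only [pushW]
      split
      · next h =>
        simp only [hu]
        have hne : ¬ ((⟨z + 1, h⟩ : Fin m) : ℕ) = 0 := by simp
        rw [dif_neg hne]
        exact fapp v _ _ (by simp)
      · next h =>
        exact fapp v _ _ (by omega)
    rw [hpush] at hstep
    have hphase : x.1 + (d : ℕ) + 1 = x.1 + ((d + 1 : ℕ) : ZMod s) := by
      push_cast
      ring
    rw [hphase] at hstep
    exact hmain.trans hstep

lemma conn_all (g : St s m → ZMod 2)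
    (H : ∀ (a : ZMod s) (w : Fin m → ZMod 2),
      (permOf g).SameCycle (a, Function.update w 0 0) (a, Function.update w 0 1)) :
    ∀ x y : St s m, (permOf g).SameCycle x y := by
  intro x y
  set d : ℕ := m + (y.1 - x.1 - (m : ZMod s)).val with hd
  have h := conn_reach g H d x y.2 (fun y' hy' _ => by omega)
  have hphase : x.1 + (d : ℕ) = y.1 := by
    rw [hd]
    push_cast
    rw [ZMod.natCast_rightInverse _]
    ring
  rw [hphase] at h
  exact h

end Conn
section Exists

variable {s m : ℕ} [NeZero s] [NeZero m]

open Classical in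
noncomputable def scSetoid (g : St s m → ZMod 2) : Setoid (St s m) :=
  ⟨(permOf g).SameCycle, ⟨fun x => Equiv.Perm.SameCycle.refl _ x,
    Equiv.Perm.SameCycle.symm, Equiv.Perm.SameCycle.trans⟩⟩

open Classical in
lemma exists_fullcycle_aux :
    ∀ (N : ℕ) (g : St s m → ZMod 2),
      Fintype.card (Quotient (scSetoid g)) ≤ N →
      ∃ g' : St s m → ZMod 2, ∀ x y : St s m, (permOf g').SameCycle x y := by
  intro N
  induction N with
  | zero =>
    intro g hg
    exfalso
    have : 0 < Fintype.card (Quotient (scSetoid g)) :=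
      @Fintype.card_pos _ _ ⟨(⟦((0 : ZMod s), fun _ => (0 : ZMod 2))⟧ : Quotient (scSetoid g))⟩
    omega
  | succ N ih =>
    intro g hg
    by_cases hall : ∀ x y : St s m, (permOf g).SameCycle x y
    · exact ⟨g, hall⟩
    · have hpair : ¬ (∀ (a : ZMod s) (w : Fin m → ZMod 2),
          (permOf g).SameCycle (a, Function.update w 0 0) (a, Function.update w 0 1)) :=
        fun H => hall (conn_all g H)
      push_neg at hpair
      obtain ⟨a₀, w, hsep⟩ := hpair
      set p : St s m := (a₀, tailRep w) with hp
      set g' : St s m → ZMod 2 := Function.update g p (g p + 1) with hg'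
      set x₀ : St s m := (a₀, Function.update w 0 0) with hx₀
      set x₁ : St s m := (a₀, Function.update w 0 1) with hx₁
      -- the two perms agree except at x₀, x₁ where they cross over
      have hgval : ∀ b : ZMod 2,
          g' (a₀, tailRep (Function.update w 0 b)) = g p + 1 := by
        intro b
        rw [tailRep_update0, hg', ← hp, Function.update_self]
      have hgval2 : ∀ b : ZMod 2,
          g (a₀, tailRep (Function.update w 0 b)) = g p := by
        intro b
        rw [tailRep_update0, hp]
      have hcross : ∀ b : ZMod 2, permOf g' (a₀, Function.update w 0 b)
          = permOf g (a₀, Function.update w 0 (b + 1)) := by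
        intro b
        rw [permOf_apply, permOf_apply, stepFun, stepFun]
        refine Prod.ext rfl ?_
        funext y
        simp only
        split
        · next h =>
          rw [Function.update_of_ne, Function.update_of_ne] <;>
            · intro hcon
              have := congrArg Fin.val hcon
              simp at this
        · rw [hgval b, hgval2 (b + 1), Function.update_self, Function.update_self]
          ring
      have h01 : permOf g' x₀ = permOf g x₁ := by
        have := hcross 0
        simpa using this
      have h10 : permOf g' x₁ = permOf g x₀ := by
        have := hcross 1
        have h11 : (1 : ZMod 2) + 1 = 0 := by decide
        rw [h11] at this
        simpa using this
      have hrest : ∀ z : St s m, z ≠ x₀ → z ≠ x₁ → permOf g' z = permOf g z := by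
        intro z hz0 hz1
        rw [permOf_apply, permOf_apply, stepFun, stepFun]
        have hgz : g' (z.1, tailRep z.2) = g (z.1, tailRep z.2) := by
          rw [hg']
          apply Function.update_of_ne
          intro hcon
          rw [hp] at hcon
          have h1 : z.1 = a₀ := (Prod.mk.injEq _ _ _ _ ▸ hcon).1
          have h2 : tailRep z.2 = tailRep w := (Prod.mk.injEq _ _ _ _ ▸ hcon).2
          have hzw : z = (a₀, Function.update w 0 (z.2 0)) := by
            refine Prod.ext h1 ?_
            show z.2 = Function.update w 0 (z.2 0)
            refine word_ext ?_ ?_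
            · rw [Function.update_self]
            · intro y hy
              have hne : (⟨y + 1, hy⟩ : Fin m) ≠ 0 := by
                intro hcon2
                have := congrArg Fin.val hcon2
                simp at this
              rw [Function.update_of_ne hne]
              have := congrFun h2 ⟨y, by omega⟩
              simp only [tailRep, dif_pos hy] at this
              exact this
          rcases zmod2_cases (z.2 0) with h | h
          · exact hz0 (by rw [hzw, h])
          · exact hz1 (by rw [hzw, h])
        rw [hgz]
      obtain ⟨hjoin, hincl⟩ := merge (permOf g) (permOf g') x₀ x₁ hsep h01 h10 hrest
      -- quotient cardinality decreases
      have hmap : ∀ a b : St s m, @Setoid.r _ (scSetoid g) a b →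
          ((⟦a⟧ : Quotient (scSetoid g')) = ⟦b⟧) := fun a b h =>
        Quotient.sound (hincl a b h)
      have hcard : Fintype.card (Quotient (scSetoid g')) <
          Fintype.card (Quotient (scSetoid g)) := by
        have hFsurj : Function.Surjective
            (Quotient.lift (fun z => (⟦z⟧ : Quotient (scSetoid g'))) hmap) := by
          intro q
          obtain ⟨z, rfl⟩ := Quotient.exists_rep q
          exact ⟨⟦z⟧, rfl⟩
        have hFninj : ¬ Function.Injective
            (Quotient.lift (fun z => (⟦z⟧ : Quotient (scSetoid g'))) hmap) := by
          intro hinj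
          have : (⟦x₀⟧ : Quotient (scSetoid g)) = ⟦x₁⟧ :=
            hinj (Quotient.sound hjoin)
          exact hsep (Quotient.exact this)
        exact Fintype.card_lt_of_surjective_not_injective _ hFsurj hFninj
      exact ih g' (by omega)

open Classical in
lemma exists_fullcycle :
    ∃ g : St s m → ZMod 2, ∀ x y : St s m, (permOf g).SameCycle x y :=
  exists_fullcycle_aux (Fintype.card (Quotient (scSetoid (fun _ => (0 : ZMod 2))))) _ le_rfl

end Exists
section Seq

lemma exists_e (s m N : ℕ) [NeZero s] [NeZero N] (hs : 1 < s) (hm : 0 < m)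
    (hN : N = s * 2 ^ m) :
    ∃ e : ZMod N → ZMod 2, Function.Bijective
      (fun j : ZMod N =>
        (((j.val : ZMod s), fun y : Fin m => e (j + (y : ℕ))) : ZMod s × (Fin m → ZMod 2))) := by
  haveI : NeZero m := ⟨Nat.pos_iff_ne_zero.mp hm⟩
  obtain ⟨g, hg⟩ := exists_fullcycle (s := s) (m := m)
  set σ := permOf g with hσ
  haveI : Fact (1 < s) := ⟨hs⟩
  have h10 : (1 : ZMod s) ≠ 0 := one_ne_zero
  have hmove : ∀ x : St s m, σ x ≠ x := by
    intro x h
    have h1 := congrArg Prod.fst h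
    simp only [hσ, permOf_apply, stepFun] at h1
    have h2 : x.1 + 1 = x.1 + 0 := by simpa using h1
    exact h10 (add_left_cancel h2)
  have hcyc : σ.IsCycle := ⟨((0 : ZMod s), fun _ => (0 : ZMod 2)),
    hmove _, fun y _ => hg _ y⟩
  have hsupp : σ.support = Finset.univ :=
    Finset.eq_univ_iff_forall.mpr fun x => Equiv.Perm.mem_support.mpr (hmove x)
  have hcardSt : Fintype.card (St s m) = N := by
    rw [hN]
    rw [Fintype.card_prod, ZMod.card]
    congr 1
    rw [Fintype.card_fun]
    simp
  have horder : orderOf σ = N := by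
    rw [hcyc.orderOf, hsupp, Finset.card_univ, hcardSt]
  set x₀ : St s m := ((0 : ZMod s), fun _ => (0 : ZMod 2)) with hx₀
  set Φ : ZMod N → St s m := fun j => (σ ^ j.val) x₀ with hΦ
  have φcast : ∀ a : ℕ, Φ ((a : ℕ) : ZMod N) = (σ ^ a) x₀ := by
    intro a
    simp only [hΦ]
    rw [ZMod.val_natCast, ← horder, pow_mod_orderOf]
  have Φ_add : ∀ (j : ZMod N) (c : ℕ), Φ (j + (c : ℕ)) = (σ ^ c) (Φ j) := by
    intro j c
    have hj : j + ((c : ℕ) : ZMod N) = (((j.val + c : ℕ)) : ZMod N) := by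
      push_cast
      rw [ZMod.natCast_rightInverse j]
    rw [hj, φcast, Nat.add_comm, pow_add, Equiv.Perm.mul_apply]
  have Φ_inj : Function.Injective Φ := by
    intro j j' h
    have hj' : j + (((j' - j).val : ℕ) : ZMod N) = j' := by
      rw [ZMod.natCast_rightInverse]
      ring
    have h2 : (σ ^ (j' - j).val) (Φ j) = Φ j := by
      rw [← Φ_add, hj', h]
    have h3 : σ ^ (j' - j).val = 1 :=
      (hcyc.pow_eq_one_iff' (hmove (Φ j))).mpr h2
    have h4 : N ∣ (j' - j).val := by
      have := orderOf_dvd_of_pow_eq_one h3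
      rwa [horder] at this
    have h5 : (j' - j).val < N := ZMod.val_lt _
    have h6 : (j' - j).val = 0 := by
      rcases h4 with ⟨c, hc⟩
      rcases c with _ | c
      · simpa using hc
      · exfalso
        have : N ≤ (j' - j).val := by
          rw [hc]
          exact Nat.le_mul_of_pos_right _ (by omega)
        omega
    have h7 : j' - j = 0 := by
      rwa [ZMod.val_eq_zero] at h6
    have : j' = j := by
      have := sub_eq_zero.mp h7
      exact this
    exact this.symm
  have wlem : ∀ (c : ℕ) (hc : c < m) (x : St s m), ((σ ^ c) x).2 0 = x.2 ⟨c, hc⟩ := by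
    intro c
    induction c with
    | zero =>
      intro hc x
      exact congrArg x.2 (by ext; simp)
    | succ c ih =>
      intro hc x
      have hc' : c < m := by omega
      rw [pow_succ, Equiv.Perm.mul_apply, ih hc' (σ x)]
      show (if h : c + 1 < m then x.2 ⟨c + 1, h⟩
        else x.2 0 + g (x.1, tailRep x.2)) = x.2 ⟨c + 1, hc⟩
      rw [dif_pos hc]
  have plem : ∀ (c : ℕ) (x : St s m), ((σ ^ c) x).1 = x.1 + (c : ℕ) := by
    intro c
    induction c with
    | zero => intro x; simp
    | succ c ih =>
      intro x
      rw [pow_succ, Equiv.Perm.mul_apply]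
      show ((σ ^ c) (stepFun g x)).1 = _
      rw [ih]
      show (x.1 + 1) + (c : ℕ) = x.1 + ((c + 1 : ℕ) : ZMod s)
      push_cast
      ring
  refine ⟨fun j => (Φ j).2 0, ?_⟩
  have hGeq : (fun j : ZMod N =>
      (((j.val : ZMod s), fun y : Fin m => (Φ (j + (y : ℕ))).2 0) : ZMod s × (Fin m → ZMod 2)))
      = Φ := by
    funext j
    refine Prod.ext ?_ ?_
    · show (j.val : ZMod s) = (Φ j).1
      rw [hΦ]
      show (j.val : ZMod s) = ((σ ^ j.val) x₀).1
      rw [plem, hx₀]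
      show (j.val : ZMod s) = 0 + (j.val : ℕ)
      rw [zero_add]
    · funext y
      show (Φ (j + ((y : ℕ) : ℕ))).2 0 = (Φ j).2 y
      rw [Φ_add, wlem (y : ℕ) y.isLt]
  rw [hGeq]
  rw [Fintype.bijective_iff_injective_and_card]
  exact ⟨Φ_inj, by rw [ZMod.card, hcardSt]⟩

end Seq
section Main

lemma zmod2_self_eq_ite (z : ZMod 2) : z = if z = 1 then 1 else 0 := by
  revert z; decide

lemma sum_univ_zmod {r : ℕ} [NeZero r] (f : ZMod r → ZMod 2) :
    ∑ x : ZMod r, f x = ∑ i ∈ Finset.range r, f (i : ZMod r) := by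
  refine Finset.sum_bij' (fun (a : ZMod r) (_ : a ∈ Finset.univ) => a.val)
    (fun (b : ℕ) (_ : b ∈ Finset.range r) => (b : ZMod r)) ?_ ?_ ?_ ?_ ?_
  · intro a _
    exact Finset.mem_range.mpr (ZMod.val_lt a)
  · intro b _
    exact Finset.mem_univ _
  · intro a _
    exact ZMod.natCast_rightInverse a
  · intro b hb
    exact ZMod.val_natCast_of_lt (Finset.mem_range.mp hb)
  · intro a _
    rw [ZMod.natCast_rightInverse a]

lemma col_sum_even {r s' : ℕ} [NeZero r] (A : ZMod r × ZMod s' → ZMod 2) (j0 : ZMod s')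
    (h : Even (colWeight A j0)) : ∑ x : ZMod r, A (x, j0) = 0 := by
  classical
  have h1 : ∑ x : ZMod r, A (x, j0)
      = ∑ x : ZMod r, (if A (x, j0) = 1 then (1 : ZMod 2) else 0) := by
    refine Finset.sum_congr rfl fun x _ => ?_
    exact zmod2_self_eq_ite _
  rw [h1, Finset.sum_boole]
  have h2 : ({i : ZMod r | A (i, j0) = 1} : Set (ZMod r)).ncard
      = (Finset.univ.filter fun x => A (x, j0) = 1).card := by
    rw [Set.ncard_eq_toFinset_card']
    congr 1
    ext x
    simp
  have h3 : ((Finset.univ.filter fun x => A (x, j0) = 1).card : ZMod 2) = 0 := by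
    obtain ⟨w, hw⟩ := h
    rw [ZMod.natCast_eq_zero_iff, ← h2]
    show 2 ∣ colWeight A j0
    rw [hw]
    exact ⟨w, by ring⟩
  exact h3

theorem stmt_13' (k n t m Δ : ℕ) (hk : 2 ≤ k) (hn : 2 ≤ n) (ht : 2 ≤ t) (hm : 2 ≤ m)
    (C : Fin Δ → (ZMod (2 ^ k) × ZMod (2 ^ t) → ZMod 2))
    (hC : IsDBAC (2 ^ k) (2 ^ t) n m Δ C)
    (heven : ∀ c, ∀ j : ZMod (2 ^ t), Even (colWeight (C c) j)) :
    ∃ C' : Fin Δ → (ZMod (2 ^ k) × ZMod (2 ^ (m + t)) → ZMod 2),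
      IsDBAC (2 ^ k) (2 ^ (m + t)) (n + 1) m Δ C' := by
  haveI h1 : NeZero (2 ^ k) := ⟨(Nat.two_pow_pos k).ne'⟩
  haveI h2 : NeZero (2 ^ t) := ⟨(Nat.two_pow_pos t).ne'⟩
  haveI h3 : NeZero (2 ^ (m + t)) := ⟨(Nat.two_pow_pos (m + t)).ne'⟩
  have hNs : 2 ^ (m + t) = 2 ^ t * 2 ^ m := by
    rw [pow_add, mul_comm]
  obtain ⟨e, hebij⟩ := exists_e (2 ^ t) m (2 ^ (m + t))
    (Nat.one_lt_two_pow (by omega)) (by omega) hNs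
  have hdvd : (2 : ℕ) ^ t ∣ 2 ^ (m + t) := pow_dvd_pow 2 (by omega)
  set π : ZMod (2 ^ (m + t)) →+* ZMod (2 ^ t) := ZMod.castHom hdvd (ZMod (2 ^ t)) with hπdef
  have hπval : ∀ j : ZMod (2 ^ (m + t)), (j.val : ZMod (2 ^ t)) = π j := by
    intro j
    rw [ZMod.natCast_val, ZMod.castHom_apply]
  have hπnat : ∀ (j : ZMod (2 ^ (m + t))) (y : ℕ), π (j + (y : ℕ)) = π j + (y : ℕ) := by
    intro j y
    rw [map_add, map_natCast]
  -- partial sums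
  set P : Fin Δ → ZMod (2 ^ k) → ZMod (2 ^ t) → ZMod 2 :=
    fun c i j0 => ∑ i' ∈ Finset.range i.val, C c ((i' : ZMod (2 ^ k)), j0) with hPdef
  have hPrec : ∀ c i j0, P c (i + 1) j0 = P c i j0 + C c (i, j0) := by
    intro c i j0
    have hiv : i + 1 = (((i.val + 1 : ℕ)) : ZMod (2 ^ k)) := by
      push_cast
      rw [ZMod.natCast_rightInverse i]
    rcases Nat.lt_or_ge (i.val + 1) (2 ^ k) with hlt | hge
    · rw [hPdef]
      simp only
      rw [hiv, ZMod.val_natCast_of_lt hlt, Finset.sum_range_succ,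
        ZMod.natCast_rightInverse i]
    · have hiv2 : i.val + 1 = 2 ^ k := by
        have := ZMod.val_lt i
        omega
      have hzero : i + 1 = 0 := by
        rw [hiv, hiv2, ZMod.natCast_self]
      rw [hzero]
      have hfull : P c i j0 + C c (i, j0) = ∑ i' ∈ Finset.range (2 ^ k),
          C c ((i' : ZMod (2 ^ k)), j0) := by
        rw [hPdef]
        simp only
        have hrr : ∑ i' ∈ Finset.range (2 ^ k), C c ((i' : ZMod (2 ^ k)), j0)
            = ∑ i' ∈ Finset.range (i.val + 1), C c ((i' : ZMod (2 ^ k)), j0) := by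
          rw [hiv2]
        rw [hrr, Finset.sum_range_succ, ZMod.natCast_rightInverse i]
      have hL : P c 0 j0 = 0 := by
        rw [hPdef]
        simp
      rw [hL, hfull, ← sum_univ_zmod (fun x => C c (x, j0)),
        col_sum_even _ _ (heven c j0)]
  -- the new family
  refine ⟨fun c x => P c x.1 (π x.2) + e x.2, ?_⟩
  have hkey : ∀ (c : Fin Δ) (w : ZMod (2 ^ k)) (z : ZMod (2 ^ (m + t))),
      P c (w + 1) (π z) + e z = (P c w (π z) + e z) + C c (w, π z) := by
    intro c w z
    rw [hPrec]
    ring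
  intro M
  set DM : Fin n → Fin m → ZMod 2 := fun x y => M x.succ y - M x.castSucc y with hDM
  obtain ⟨⟨c, i, j0⟩, hwin, huniq⟩ := hC DM
  simp only at hwin
  set v : Fin m → ZMod 2 := fun y => M 0 y - P c i (j0 + (y : ℕ)) with hv
  obtain ⟨j, hj⟩ := hebij.surjective (j0, v)
  have hj1 : π j = j0 := by
    rw [← hπval]
    exact congrArg Prod.fst hj
  have hj2 : ∀ y : Fin m, e (j + (y : ℕ)) = v y := by
    intro y
    exact congrFun (congrArg Prod.snd hj) y
  -- the window of the candidate equals M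
  have hwin' : ∀ (x : ℕ) (hx : x < n + 1) (y : Fin m),
      P c (i + (x : ℕ)) (π (j + (y : ℕ))) + e (j + (y : ℕ)) = M ⟨x, hx⟩ y := by
    intro x
    induction x with
    | zero =>
      intro hx y
      have h0 : ((0 : ℕ) : ZMod (2 ^ k)) = 0 := by norm_num
      rw [h0, add_zero, hπnat, hj1, hj2]
      rw [hv]
      simp only
      have : (⟨0, hx⟩ : Fin (n + 1)) = 0 := rfl
      rw [this]
      ring
    | succ x ih =>
      intro hx y
      have hxn : x < n + 1 := by omega
      have hcast : i + ((x + 1 : ℕ) : ZMod (2 ^ k)) = (i + (x : ℕ)) + 1 := by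
        push_cast
        ring
      rw [hcast, hkey, ih hxn y]
      have hCw := hwin ⟨x, by omega⟩ y
      rw [hπnat, hj1]
      have hxc : (((⟨x, by omega⟩ : Fin n) : ℕ) : ZMod (2 ^ k)) = ((x : ℕ) : ZMod (2 ^ k)) := rfl
      rw [hDM] at hCw
      simp only at hCw
      have hsucc : (⟨x, by omega⟩ : Fin n).succ = ⟨x + 1, hx⟩ := rfl
      have hcs : (⟨x, by omega⟩ : Fin n).castSucc = ⟨x, hxn⟩ := rfl
      rw [hsucc, hcs] at hCw
      rw [hCw]
      ring
  refine ⟨⟨c, i, j⟩, ?_, ?_⟩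
  · intro x y
    simp only
    exact hwin' x.val x.isLt y |>.trans (by rw [Fin.eta])
  · rintro ⟨c', i', j'⟩ hq
    simp only at hq
    -- difference windows match DM
    have hDwin : ∀ (x : Fin n) (y : Fin m),
        C c' (i' + (x : ℕ), π j' + (y : ℕ)) = DM x y := by
      intro x y
      have hq1 := hq x.succ y
      have hq2 := hq x.castSucc y
      rw [Fin.val_succ] at hq1
      rw [Fin.coe_castSucc] at hq2
      have hcast : i' + ((x.val + 1 : ℕ) : ZMod (2 ^ k)) = (i' + (x.val : ℕ)) + 1 := by
        push_cast
        ring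
      rw [hcast, hkey] at hq1
      rw [hq2] at hq1
      rw [hDM]
      simp only
      rw [← hπnat j' y.val]
      have := hq1
      linear_combination this - hq2 * 0 - hq2 + hq2
    -- apply uniqueness of the base code
    have heq := huniq (c', i', π j') hDwin
    have hc' : c' = c := congrArg (fun p => p.1) heq
    have hi' : i' = i := congrArg (fun p => p.2.1) heq
    have hj0' : π j' = j0 := congrArg (fun p => p.2.2) heq
    -- top row determines e-window of j'
    have hj'2 : ∀ y : Fin m, e (j' + (y : ℕ)) = v y := by
      intro y
      have hq0 := hq 0 y
      have h0 : ((0 : Fin (n + 1)) : ℕ) = 0 := rfl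
      rw [h0] at hq0
      have h0' : i' + ((0 : ℕ) : ZMod (2 ^ k)) = i' := by
        norm_num
      rw [h0', hπnat, hc', hi', hj0'] at hq0
      rw [hv]
      simp only
      linear_combination hq0
    have hGj' : (((j'.val : ZMod (2 ^ t)),
        fun y : Fin m => e (j' + (y : ℕ))) : ZMod (2 ^ t) × (Fin m → ZMod 2)) = (j0, v) := by
      refine Prod.ext ?_ ?_
      · show (j'.val : ZMod (2 ^ t)) = j0
        rw [hπval, hj0']
      · funext y
        exact hj'2 y
    have hj'j : j' = j := hebij.injective (hGj'.trans hj.symm)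
    refine Prod.ext hc' (Prod.ext hi' hj'j)

theorem stmt_13_final (k n t m Δ : ℕ) (hk : 2 ≤ k) (hn : 2 ≤ n) (ht : 2 ≤ t) (hm : 2 ≤ m)
    (C : Fin Δ → (ZMod (2 ^ k) × ZMod (2 ^ t) → ZMod 2))
    (hC : IsDBAC (2 ^ k) (2 ^ t) n m Δ C)
    (heven : ∀ c, ∀ j : ZMod (2 ^ t), Even (colWeight (C c) j)) :
    ∃ C' : Fin Δ → (ZMod (2 ^ k) × ZMod (2 ^ (m + t)) → ZMod 2),
      IsDBAC (2 ^ k) (2 ^ (m + t)) (n + 1) m Δ C' :=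
  stmt_13' k n t m Δ hk hn ht hm C hC heven

end Main
end DBACAux

theorem stmt_13 (k n t m Δ : ℕ) (hk : 2 ≤ k) (hn : 2 ≤ n) (ht : 2 ≤ t) (hm : 2 ≤ m)
    (C : Fin Δ → (ZMod (2 ^ k) × ZMod (2 ^ t) → ZMod 2))
    (hC : IsDBAC (2 ^ k) (2 ^ t) n m Δ C)
    (heven : ∀ c, ∀ j : ZMod (2 ^ t), Even (colWeight (C c) j)) :
    ∃ C' : Fin Δ → (ZMod (2 ^ k) × ZMod (2 ^ (m + t)) → ZMod 2),
      IsDBAC (2 ^ k) (2 ^ (m + t)) (n + 1) m Δ C' := by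
  exact DBACAux.stmt_13_final k n t m Δ hk hn ht hm C hC heven
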